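/- The Bessel inequality for the Kaczmarz auxiliary vectors: ∑_{n=0}^∞ |⟨x, g_n⟩|² ≤ ‖x‖² for all x ∈ H. -/

import Mathlib

open scoped ComplexInnerProductSpace

theorem kaczmarz_bessel_inequality
    {H : Type*} [NormedAddCommGroup H] [InnerProductSpace ℂ H]
    (e g : ℕ → H) (he : ∀ n, ‖e n‖ = 1)
    (hg0 : g 0 = e 0)
    (hg : ∀ n, 0 < n → g n = e n - ∑ i ∈ Finset.range n, ⟪e i, e n⟫ • g i) :
    ∀ x : H, Summable (fun n => ‖⟪g n, x⟫‖ ^ 2) ∧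
      ∑' n, ‖⟪g n, x⟫‖ ^ 2 ≤ ‖x‖ ^ 2 := by
  intro x
  set f : ℕ → H := fun n => x - ∑ i ∈ Finset.range n, ⟪g i, x⟫ • e i with hf
  have key : ∀ n, ⟪g n, x⟫ = ⟪e n, f n⟫ := by
    intro n
    rcases Nat.eq_zero_or_pos n with h | h
    · subst h; simp [hf, hg0]
    · rw [hg n h]
      simp only [hf, inner_sub_left, inner_sub_right, sum_inner, inner_sum,
        inner_smul_left, inner_smul_right]
      congr 1
      refine Finset.sum_congr rfl fun i _ => ?_
      rw [← inner_conj_symm (e n) (e i)]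
      ring
  have step : ∀ n, ‖f (n + 1)‖ ^ 2 = ‖f n‖ ^ 2 - ‖⟪g n, x⟫‖ ^ 2 := by
    intro n
    have hfn : f (n + 1) = f n - ⟪g n, x⟫ • e n := by
      simp only [hf, Finset.sum_range_succ]
      abel
    have h1 : ⟪f n, (⟪g n, x⟫ : ℂ) • e n⟫ = ⟪g n, x⟫ * (starRingEnd ℂ) ⟪g n, x⟫ := by
      rw [inner_smul_right,
        show (⟪f n, e n⟫ : ℂ) = (starRingEnd ℂ) ⟪e n, f n⟫ from (inner_conj_symm _ _).symm,
        ← key n]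
    rw [hfn, @norm_sub_sq ℂ, h1]
    have h2 : ‖(⟪g n, x⟫ : ℂ) • e n‖ = ‖⟪g n, x⟫‖ := by
      rw [norm_smul, he n, mul_one]
    rw [h2]
    have h3 : RCLike.re (⟪g n, x⟫ * (starRingEnd ℂ) ⟪g n, x⟫) = ‖⟪g n, x⟫‖ ^ 2 := by
      rw [Complex.mul_conj]
      simp [Complex.normSq_eq_norm_sq, ← Complex.ofReal_pow]
    rw [h3]; ring
  have hpartial : ∀ n, ∑ k ∈ Finset.range n, ‖⟪g k, x⟫‖ ^ 2 = ‖x‖ ^ 2 - ‖f n‖ ^ 2 := by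
    intro n
    induction n with
    | zero => simp [hf]
    | succ n ih => rw [Finset.sum_range_succ, ih, step n]; ring
  have bound : ∀ n, ∑ k ∈ Finset.range n, ‖⟪g k, x⟫‖ ^ 2 ≤ ‖x‖ ^ 2 := by
    intro n
    rw [hpartial n]
    nlinarith [sq_nonneg ‖f n‖]
  have hsum : Summable fun n => ‖⟪g n, x⟫‖ ^ 2 :=
    summable_of_sum_range_le (fun n => by positivity) bound
  exact ⟨hsum, Summable.tsum_le_of_sum_range_le hsum bound⟩
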